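/- Let n ≥ 1, d ≥ 1, let X be uniformly distributed on {-1,1}^n, and let P be a polynomial of degree at most d on {-1,1}^n with E P(X) = 0. Set σ_- = (E[(max(-P(X),0))^2])^{1/2} and σ_+ = (E[(max(P(X),0))^2])^{1/2}. If σ_+ < σ_-, then E[max(P(X),0)] = E[max(-P(X),0)] ≥ σ_-^3 / (2 · 3^d · (σ_+^2 + σ_-^2)), and consequently σ_+ ≥ σ_- / (4 · 3^d). -/

import Mathlib

open Classical

/-- Expectation with respect to the uniform measure on the discrete cube `{-1,1}^n`,
encoded as `Fin n → Bool` (`true ↦ 1`, `false ↦ -1`). -/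
noncomputable def cubeE (n : ℕ) (f : (Fin n → Bool) → ℝ) : ℝ :=
  (∑ x : Fin n → Bool, f x) / 2 ^ n

/-- The real value of a coordinate of the cube: `true ↦ 1`, `false ↦ -1`. -/
def cubeSign (b : Bool) : ℝ := if b then 1 else -1

/-- `P` is (the restriction to the cube of) a multilinear polynomial of degree at most `d`:
`P x = ∑_{#S ≤ d} a_S ∏_{i ∈ S} x_i`. -/
def IsPolyDeg (n d : ℕ) (P : (Fin n → Bool) → ℝ) : Prop :=
  ∃ a : Finset (Fin n) → ℝ,
    (∀ S : Finset (Fin n), d < S.card → a S = 0) ∧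
    ∀ x, P x = ∑ S : Finset (Fin n), a S * ∏ i ∈ S, cubeSign (x i)

/-- Probability (uniform measure) of a set of points of the cube. -/
noncomputable def cubePr (n : ℕ) (A : Set (Fin n → Bool)) : ℝ :=
  (∑ x : Fin n → Bool, if x ∈ A then (1 : ℝ) else 0) / 2 ^ n

/-- `a` is an `e^{-r}`-quantile of `P(X)`:
`ℙ(P(X) ≥ a) ≥ e^{-r}` and `ℙ(P(X) ≤ a) ≥ 1 - e^{-r}`. -/
def IsQuantile (n : ℕ) (P : (Fin n → Bool) → ℝ) (r a : ℝ) : Prop :=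
  Real.exp (-r) ≤ cubePr n {x | a ≤ P x} ∧ 1 - Real.exp (-r) ≤ cubePr n {x | P x ≤ a}

/-- Discrete partial derivative: `∂_i f(x) = (f(T_i^1 x) - f(T_i^{-1} x))/2`. -/
noncomputable def discDeriv (n : ℕ) (f : (Fin n → Bool) → ℝ) (i : Fin n)
    (x : Fin n → Bool) : ℝ :=
  (f (Function.update x i true) - f (Function.update x i false)) / 2

/-- Squared norm of the discrete gradient: `|∇f(x)|² = ∑_i |∂_i f(x)|²`. -/
noncomputable def gradSq (n : ℕ) (f : (Fin n → Bool) → ℝ) (x : Fin n → Bool) : ℝ :=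
  ∑ i : Fin n, (discDeriv n f i x) ^ 2

section Aux
open Finset

variable {n : ℕ}

lemma le_of_sq_le' {x y : ℝ} (hy : 0 ≤ y) (h : x ^ 2 ≤ y ^ 2) : x ≤ y := by
  nlinarith [sq_nonneg (x + y), sq_nonneg (x - y)]

lemma nine_pow (k : ℕ) : (9 : ℝ) ^ k = ((3 : ℝ) ^ k) ^ 2 := by
  rw [← pow_mul, mul_comm, pow_mul]; norm_num

lemma sum_update_eq (j : Fin n) (K : (Fin n → Bool) → ℝ) (b : Bool) :
    ∑ x : Fin n → Bool, K (Function.update x j b)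
      = 2 * ∑ x ∈ Finset.univ.filter (fun x => x j = b), K x := by
  rw [← Finset.sum_filter_add_sum_filter_not Finset.univ (fun x => x j = b)
      (fun x => K (Function.update x j b))]
  have h1 : ∑ x ∈ Finset.univ.filter (fun x => x j = b), K (Function.update x j b)
      = ∑ x ∈ Finset.univ.filter (fun x => x j = b), K x := by
    refine Finset.sum_congr rfl fun x hx => ?_
    have hxj : x j = b := (Finset.mem_filter.mp hx).2
    rw [← hxj, Function.update_eq_self]
  have h2 : ∑ x ∈ Finset.univ.filter (fun x => ¬ x j = b), K (Function.update x j b)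
      = ∑ x ∈ Finset.univ.filter (fun x => x j = b), K x := by
    refine Finset.sum_nbij' (fun x => Function.update x j b)
      (fun x => Function.update x j (!b)) ?_ ?_ ?_ ?_ ?_
    · intro x _
      simp [Function.update_self]
    · intro x hx
      have hxj : x j = b := (Finset.mem_filter.mp hx).2
      simp [Function.update_self, hxj]
    · intro x hx
      have hxj : x j = !b := by
        have := (Finset.mem_filter.mp hx).2
        cases b <;> cases hxb : x j <;> simp_all
      show Function.update (Function.update x j b) j (!b) = x
      rw [Function.update_idem, ← hxj, Function.update_eq_self]
    · intro x hx
      have hxj : x j = b := (Finset.mem_filter.mp hx).2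
      show Function.update (Function.update x j (!b)) j b = x
      rw [Function.update_idem, ← hxj, Function.update_eq_self]
    · intro x _; rfl
  rw [h1, h2]; ring

lemma sum_filter_indep (j : Fin n) (K : (Fin n → Bool) → ℝ)
    (hK : ∀ x b, K (Function.update x j b) = K x) (b : Bool) :
    ∑ x ∈ Finset.univ.filter (fun x => x j = b), K x = (∑ x : Fin n → Bool, K x) / 2 := by
  have h := sum_update_eq j K b
  simp only [hK] at h
  linarith

lemma sum_split (j : Fin n) (G H : (Fin n → Bool) → ℝ)
    (hG : ∀ x b, G (Function.update x j b) = G x)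
    (hH : ∀ x b, H (Function.update x j b) = H x) (F : ℝ → ℝ) :
    ∑ x : Fin n → Bool, F (G x + cubeSign (x j) * H x)
      = ((∑ x : Fin n → Bool, F (G x + H x)) + ∑ x : Fin n → Bool, F (G x - H x)) / 2 := by
  rw [← Finset.sum_filter_add_sum_filter_not Finset.univ (fun x => x j = true)
      (fun x => F (G x + cubeSign (x j) * H x))]
  have e1 : ∑ x ∈ Finset.univ.filter (fun x => x j = true), F (G x + cubeSign (x j) * H x)
      = ∑ x ∈ Finset.univ.filter (fun x => x j = true), F (G x + H x) := by
    refine Finset.sum_congr rfl fun x hx => ?_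
    rw [(Finset.mem_filter.mp hx).2]
    simp [cubeSign]
  have e2 : Finset.univ.filter (fun x : Fin n → Bool => ¬ x j = true)
      = Finset.univ.filter (fun x => x j = false) := by
    apply Finset.filter_congr
    intro x _
    simp
  have e3 : ∑ x ∈ Finset.univ.filter (fun x => x j = false), F (G x + cubeSign (x j) * H x)
      = ∑ x ∈ Finset.univ.filter (fun x => x j = false), F (G x - H x) := by
    refine Finset.sum_congr rfl fun x hx => ?_
    rw [(Finset.mem_filter.mp hx).2]
    show F (G x + (-1) * H x) = F (G x - H x)
    congr 1; ring
  rw [e1, e2, e3,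
    sum_filter_indep j (fun x => F (G x + H x)) (fun x b => by
      show F (G (Function.update x j b) + H (Function.update x j b)) = F (G x + H x)
      rw [hG, hH]) true,
    sum_filter_indep j (fun x => F (G x - H x)) (fun x b => by
      show F (G (Function.update x j b) - H (Function.update x j b)) = F (G x - H x)
      rw [hG, hH]) false]
  ring


noncomputable def polyF (n : ℕ) (a : Finset (Fin n) → ℝ) : (Fin n → Bool) → ℝ :=
  fun x => ∑ S : Finset (Fin n), a S * ∏ i ∈ S, cubeSign (x i)

lemma polyF_indep (j : Fin n) (a : Finset (Fin n) → ℝ) (ha : ∀ S, j ∈ S → a S = 0) :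
    ∀ (x : Fin n → Bool) (b : Bool), polyF n a (Function.update x j b) = polyF n a x := by
  intro x b
  refine Finset.sum_congr rfl fun S _ => ?_
  by_cases hj : j ∈ S
  · rw [ha S hj]; ring
  · congr 1
    refine Finset.prod_congr rfl fun i hi => ?_
    rw [Function.update_of_ne (fun h => hj (by rw [← h]; exact hi))]

lemma sum_insert_reindex (j : Fin n) (F : Finset (Fin n) → ℝ) :
    ∑ S ∈ Finset.univ.filter (fun S => j ∈ S), F S
      = ∑ T ∈ Finset.univ.filter (fun T => j ∉ T), F (insert j T) := by
  refine Finset.sum_nbij' (fun S => S.erase j) (fun T => insert j T) ?_ ?_ ?_ ?_ ?_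
  · intro S _; simp
  · intro T hT
    simp only [Finset.mem_filter, Finset.mem_univ, true_and] at hT ⊢
    exact Finset.mem_insert_self j T
  · intro S hS
    exact Finset.insert_erase (Finset.mem_filter.mp hS).2
  · intro T hT
    exact Finset.erase_insert (Finset.mem_filter.mp hT).2
  · intro S hS
    rw [Finset.insert_erase (Finset.mem_filter.mp hS).2]

lemma polyF_decomp (j : Fin n) (a : Finset (Fin n) → ℝ) (x : Fin n → Bool) :
    polyF n a x = polyF n (fun S => if j ∈ S then 0 else a S) x
      + cubeSign (x j) * polyF n (fun S => if j ∈ S then 0 else a (insert j S)) x := by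
  unfold polyF
  rw [← Finset.sum_filter_add_sum_filter_not Finset.univ (fun S => j ∈ S)
      (fun S => a S * ∏ i ∈ S, cubeSign (x i))]
  have h2 : ∑ S ∈ Finset.univ.filter (fun S => j ∉ S), a S * ∏ i ∈ S, cubeSign (x i)
      = ∑ S : Finset (Fin n), (if j ∈ S then 0 else a S) * ∏ i ∈ S, cubeSign (x i) := by
    rw [← Finset.sum_filter_add_sum_filter_not Finset.univ (fun S => j ∈ S)
      (fun S => (if j ∈ S then 0 else a S) * ∏ i ∈ S, cubeSign (x i))]
    have hz : ∑ S ∈ Finset.univ.filter (fun S => j ∈ S),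
        (if j ∈ S then 0 else a S) * ∏ i ∈ S, cubeSign (x i) = 0 := by
      refine Finset.sum_eq_zero fun S hS => ?_
      rw [if_pos (Finset.mem_filter.mp hS).2]; ring
    rw [hz, zero_add]
    refine Finset.sum_congr rfl fun S hS => ?_
    rw [if_neg (Finset.mem_filter.mp hS).2]
  have h1 : ∑ S ∈ Finset.univ.filter (fun S => j ∈ S), a S * ∏ i ∈ S, cubeSign (x i)
      = cubeSign (x j)
        * ∑ S : Finset (Fin n), (if j ∈ S then 0 else a (insert j S)) * ∏ i ∈ S, cubeSign (x i) := by
    rw [sum_insert_reindex j (fun S => a S * ∏ i ∈ S, cubeSign (x i))]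
    rw [← Finset.sum_filter_add_sum_filter_not Finset.univ (fun S => j ∈ S)
      (fun S => (if j ∈ S then 0 else a (insert j S)) * ∏ i ∈ S, cubeSign (x i))]
    have hz : ∑ S ∈ Finset.univ.filter (fun S => j ∈ S),
        (if j ∈ S then 0 else a (insert j S)) * ∏ i ∈ S, cubeSign (x i) = 0 := by
      refine Finset.sum_eq_zero fun S hS => ?_
      rw [if_pos (Finset.mem_filter.mp hS).2]; ring
    rw [hz, zero_add, Finset.mul_sum]
    refine Finset.sum_congr rfl fun T hT => ?_
    have hjT : j ∉ T := (Finset.mem_filter.mp hT).2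
    rw [if_neg hjT, Finset.prod_insert hjT]
    ring
  rw [h1, h2]
  ring

lemma hyper (n : ℕ) (J : Finset (Fin n)) : ∀ (d : ℕ) (a : Finset (Fin n) → ℝ),
    (∀ S, ¬ S ⊆ J → a S = 0) → (∀ S, d < S.card → a S = 0) →
    ∑ x : Fin n → Bool, (polyF n a x) ^ 4
      ≤ 9 ^ d * (∑ x : Fin n → Bool, (polyF n a x) ^ 2) ^ 2 / 2 ^ n := by
  induction J using Finset.induction_on with
  | empty =>
    intro d a hsup _
    have hconst : ∀ x, polyF n a x = a ∅ * 1 := by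
      intro x
      unfold polyF
      rw [Finset.sum_eq_single ∅]
      · simp
      · intro S _ hS
        rw [hsup S (fun h => hS (Finset.subset_empty.mp h))]; ring
      · intro h; exact absurd (Finset.mem_univ ∅) h
    simp only [hconst, mul_one]
    rw [Finset.sum_const, Finset.sum_const, Finset.card_univ]
    have hcard : Fintype.card (Fin n → Bool) = 2 ^ n := by simp
    rw [hcard]
    simp only [nsmul_eq_mul]
    push_cast
    rw [le_div_iff₀ (by positivity : (0:ℝ) < 2 ^ n)]
    have h9 : (1:ℝ) ≤ 9 ^ d := one_le_pow₀ (by norm_num : (1:ℝ) ≤ 9)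
    nlinarith [sq_nonneg ((2:ℝ) ^ n * a ∅ ^ 2), sq_nonneg (a ∅ ^ 2), pow_pos (by norm_num : (0:ℝ) < 2) n]
  | @insert j J' hj IH =>
    intro d a hsup hdeg
    have h2n : (0:ℝ) < 2 ^ n := by positivity
    have hGind := polyF_indep j (fun S => if j ∈ S then 0 else a S) (fun S hS => if_pos hS)
    have hHind := polyF_indep j (fun S => if j ∈ S then 0 else a (insert j S)) (fun S hS => if_pos hS)
    have hdecomp := polyF_decomp j a
    set G := polyF n (fun S => if j ∈ S then 0 else a S) with hGdef
    set H := polyF n (fun S => if j ∈ S then 0 else a (insert j S)) with hHdef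
    have hs4 : ∑ x : Fin n → Bool, polyF n a x ^ 4
        = ∑ x : Fin n → Bool, ((G x)^4 + 6*(G x)^2*(H x)^2 + (H x)^4) := by
      have h := sum_split j G H hGind hHind (fun t => t ^ 4)
      beta_reduce at h
      calc ∑ x : Fin n → Bool, polyF n a x ^ 4
          = ∑ x : Fin n → Bool, (G x + cubeSign (x j) * H x) ^ 4 :=
            Finset.sum_congr rfl fun x _ => by rw [hdecomp x]
        _ = ((∑ x : Fin n → Bool, (G x + H x)^4) + ∑ x : Fin n → Bool, (G x - H x)^4)/2 := h
        _ = ∑ x : Fin n → Bool, ((G x + H x)^4 + (G x - H x)^4)/2 := by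
            rw [← Finset.sum_add_distrib, Finset.sum_div]
        _ = _ := Finset.sum_congr rfl fun x _ => by ring
    have hs2 : ∑ x : Fin n → Bool, polyF n a x ^ 2
        = ∑ x : Fin n → Bool, ((G x)^2 + (H x)^2) := by
      have h := sum_split j G H hGind hHind (fun t => t ^ 2)
      beta_reduce at h
      calc ∑ x : Fin n → Bool, polyF n a x ^ 2
          = ∑ x : Fin n → Bool, (G x + cubeSign (x j) * H x) ^ 2 :=
            Finset.sum_congr rfl fun x _ => by rw [hdecomp x]
        _ = ((∑ x : Fin n → Bool, (G x + H x)^2) + ∑ x : Fin n → Bool, (G x - H x)^2)/2 := h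
        _ = ∑ x : Fin n → Bool, ((G x + H x)^2 + (G x - H x)^2)/2 := by
            rw [← Finset.sum_add_distrib, Finset.sum_div]
        _ = _ := Finset.sum_congr rfl fun x _ => by ring
    have hA0 : (0:ℝ) ≤ ∑ x : Fin n → Bool, (G x)^2 := Finset.sum_nonneg fun x _ => sq_nonneg _
    have hB0 : (0:ℝ) ≤ ∑ x : Fin n → Bool, (H x)^2 := Finset.sum_nonneg fun x _ => sq_nonneg _
    have hG4 : ∑ x : Fin n → Bool, (G x)^4
        ≤ 9^d * (∑ x : Fin n → Bool, (G x)^2)^2 / 2^n := by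
      rw [hGdef]
      refine IH d _ ?_ ?_
      · intro S hS
        by_cases hjS : j ∈ S
        · simp [hjS]
        · simp only [if_neg hjS]
          exact hsup S (fun hsub => hS ((Finset.subset_insert_iff_of_notMem hjS).mp hsub))
      · intro S hS
        by_cases hjS : j ∈ S
        · simp [hjS]
        · simp only [if_neg hjS]; exact hdeg S hS
    rcases d with _ | d'
    · have hH0 : ∀ x, H x = 0 := by
        intro x
        rw [hHdef]
        refine Finset.sum_eq_zero fun S _ => ?_
        by_cases hjS : j ∈ S
        · simp [hjS]
        · simp only [if_neg hjS]
          rw [hdeg (insert j S)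
            (by rw [Finset.card_insert_of_notMem hjS]; exact Nat.succ_pos _)]
          ring
      rw [hs4, hs2]
      simp only [hH0]
      norm_num
      simpa using hG4
    · have hH4 : ∑ x : Fin n → Bool, (H x)^4
          ≤ 9^d' * (∑ x : Fin n → Bool, (H x)^2)^2 / 2^n := by
        rw [hHdef]
        refine IH d' _ ?_ ?_
        · intro S hS
          by_cases hjS : j ∈ S
          · simp [hjS]
          · simp only [if_neg hjS]
            apply hsup
            intro hsub
            exact hS ((Finset.subset_insert_iff_of_notMem hjS).mp
              ((Finset.subset_insert j S).trans hsub))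
        · intro S hS
          by_cases hjS : j ∈ S
          · simp [hjS]
          · simp only [if_neg hjS]
            apply hdeg
            rw [Finset.card_insert_of_notMem hjS]
            omega
      set A := ∑ x : Fin n → Bool, (G x)^2 with hAdef
      set B := ∑ x : Fin n → Bool, (H x)^2 with hBdef
      set q : ℝ := 3 ^ d' with hq
      have hq0 : (0:ℝ) ≤ q := by rw [hq]; positivity
      have h9' : (9:ℝ)^d' = q^2 := by rw [nine_pow, hq]
      have h9d : (9:ℝ)^(d'+1) = 9*q^2 := by rw [pow_succ, h9']; ring
      have hSH40 : (0:ℝ) ≤ ∑ x : Fin n → Bool, (H x)^4 :=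
        Finset.sum_nonneg fun x _ => by positivity
      have hG40 : (0:ℝ) ≤ 9^(d'+1) * A^2/2^n :=
        div_nonneg (mul_nonneg (by positivity) (sq_nonneg A)) h2n.le
      have hGH : ∑ x : Fin n → Bool, (G x)^2 * (H x)^2 ≤ 3*q^2*A*B/2^n := by
        apply le_of_sq_le'
        · exact div_nonneg (mul_nonneg (mul_nonneg (by positivity) hA0) hB0) h2n.le
        · calc (∑ x : Fin n → Bool, (G x)^2*(H x)^2)^2
              ≤ (∑ x : Fin n → Bool, ((G x)^2)^2) * (∑ x : Fin n → Bool, ((H x)^2)^2) :=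
                Finset.sum_mul_sq_le_sq_mul_sq _ _ _
            _ = (∑ x : Fin n → Bool, (G x)^4) * (∑ x : Fin n → Bool, (H x)^4) := by
                congr 1 <;> exact Finset.sum_congr rfl fun x _ => by ring
            _ ≤ (9^(d'+1) * A^2/2^n) * (9^d' * B^2/2^n) := by
                apply mul_le_mul hG4 hH4 hSH40 hG40
            _ = (3*q^2*A*B/2^n)^2 := by rw [h9d, h9']; ring
      have hnum : 9*q^2*A^2 + 6*(3*q^2*A*B) + q^2*B^2 ≤ 9*q^2*(A+B)^2 := by
        nlinarith [sq_nonneg (q*B), mul_nonneg hA0 hB0, sq_nonneg q]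
      have hfinal : 9^(d'+1)*A^2/2^n + 6*(3*q^2*A*B/2^n) + 9^d'*B^2/2^n
          ≤ 9^(d'+1)*(A+B)^2/2^n := by
        rw [h9d, h9']
        calc 9*q^2*A^2/2^n + 6*(3*q^2*A*B/2^n) + q^2*B^2/2^n
            = (9*q^2*A^2 + 6*(3*q^2*A*B) + q^2*B^2)/2^n := by ring
          _ ≤ (9*q^2*(A+B)^2)/2^n := by
              apply div_le_div_of_nonneg_right hnum h2n.le
          _ = 9*q^2*(A+B)^2/2^n := by ring
      rw [hs4, hs2]
      have hexp : ∑ x : Fin n → Bool, ((G x)^4 + 6*(G x)^2*(H x)^2 + (H x)^4)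
          = (∑ x : Fin n → Bool, (G x)^4) + 6*(∑ x : Fin n → Bool, (G x)^2*(H x)^2)
            + ∑ x : Fin n → Bool, (H x)^4 := by
        rw [Finset.sum_add_distrib, Finset.sum_add_distrib]
        congr 1
        congr 1
        rw [Finset.mul_sum]
        exact Finset.sum_congr rfl fun x _ => by ring
      rw [hexp, Finset.sum_add_distrib]
      calc (∑ x : Fin n → Bool, (G x)^4) + 6*(∑ x : Fin n → Bool, (G x)^2*(H x)^2)
            + ∑ x : Fin n → Bool, (H x)^4
          ≤ 9^(d'+1)*A^2/2^n + 6*(3*q^2*A*B/2^n) + 9^d'*B^2/2^n := by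
            refine add_le_add (add_le_add hG4 ?_) hH4
            exact mul_le_mul_of_nonneg_left hGH (by norm_num)
        _ ≤ 9^(d'+1)*(A+B)^2/2^n := hfinal

lemma cubeE_nonneg (n : ℕ) (f : (Fin n → Bool) → ℝ) (hf : ∀ x, 0 ≤ f x) : 0 ≤ cubeE n f :=
  div_nonneg (Finset.sum_nonneg fun x _ => hf x) (by positivity)

lemma cubeE_sub (n : ℕ) (f g : (Fin n → Bool) → ℝ) :
    cubeE n (fun x => f x - g x) = cubeE n f - cubeE n g := by
  unfold cubeE
  rw [← sub_div, ← Finset.sum_sub_distrib]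

lemma cubeE_CS (n : ℕ) (f g : (Fin n → Bool) → ℝ) :
    (cubeE n fun x => f x * g x) ^ 2 ≤ (cubeE n fun x => f x ^ 2) * cubeE n fun x => g x ^ 2 := by
  unfold cubeE
  have h2 : ((2:ℝ)^n)*((2:ℝ)^n) = ((2:ℝ)^n)^2 := (sq _).symm
  rw [div_pow, div_mul_div_comm, h2]
  exact div_le_div_of_nonneg_right (Finset.sum_mul_sq_le_sq_mul_sq _ f g) (by positivity)

lemma cubeE_one (n : ℕ) : cubeE n (fun _ => (1:ℝ)) = 1 := by
  unfold cubeE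
  rw [Finset.sum_const, Finset.card_univ]
  have hcard : Fintype.card (Fin n → Bool) = 2 ^ n := by simp
  rw [hcard]
  simp only [nsmul_eq_mul, mul_one]
  push_cast
  exact div_self (by positivity : (0:ℝ) < 2 ^ n).ne'

set_option maxHeartbeats 1000000 in
/-- If `σ₊ < σ₋` for a centered degree-`d` polynomial, then
`E P₊ = E P₋ ≥ σ₋³ / (2 · 3^d (σ₊² + σ₋²))` and consequently `σ₊ ≥ σ₋ / (4 · 3^d)`. -/
theorem negative_part_estimate (n d : ℕ) (hn : 1 ≤ n) (hd : 1 ≤ d)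
    (P : (Fin n → Bool) → ℝ) (hP : IsPolyDeg n d P) (hmean : cubeE n P = 0)
    (σp σm : ℝ)
    (hσp : σp = Real.sqrt (cubeE n fun x => (max (P x) 0) ^ 2))
    (hσm : σm = Real.sqrt (cubeE n fun x => (max (-P x) 0) ^ 2))
    (hlt : σp < σm) :
    (cubeE n (fun x => max (P x) 0) = cubeE n (fun x => max (-P x) 0) ∧
      σm ^ 3 / (2 * 3 ^ d * (σp ^ 2 + σm ^ 2)) ≤ cubeE n (fun x => max (-P x) 0)) ∧
      σm / (4 * 3 ^ d) ≤ σp := by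
  obtain ⟨a, hdeg, hPa⟩ := hP
  have h2n : (0:ℝ) < 2 ^ n := by positivity
  have h3pos : (0:ℝ) < 3 ^ d := by positivity
  have hu0 : ∀ x, 0 ≤ max (-P x) 0 := fun x => le_max_right _ _
  have hvsq0 : 0 ≤ cubeE n fun x => (max (P x) 0) ^ 2 :=
    cubeE_nonneg _ _ fun x => sq_nonneg _
  have husq0 : 0 ≤ cubeE n fun x => (max (-P x) 0) ^ 2 :=
    cubeE_nonneg _ _ fun x => sq_nonneg _
  have hσp2 : σp ^ 2 = cubeE n fun x => (max (P x) 0) ^ 2 := by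
    rw [hσp]; exact Real.sq_sqrt hvsq0
  have hσm2 : σm ^ 2 = cubeE n fun x => (max (-P x) 0) ^ 2 := by
    rw [hσm]; exact Real.sq_sqrt husq0
  have hσp0 : 0 ≤ σp := hσp ▸ Real.sqrt_nonneg _
  have hσm0 : 0 < σm := lt_of_le_of_lt hσp0 hlt
  have hσm2pos : 0 < σm ^ 2 := pow_pos hσm0 2
  have hσ2pos : 0 < σp ^ 2 + σm ^ 2 := by positivity
  set A := cubeE n (fun x => max (-P x) 0) with hAdef
  set C := cubeE n (fun x => (max (-P x) 0) ^ 3) with hCdef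
  set D := cubeE n (fun x => (max (-P x) 0) ^ 4) with hDdef
  clear_value A C D
  have hA0 : 0 ≤ A := hAdef ▸ cubeE_nonneg _ _ hu0
  have hC0 : 0 ≤ C := hCdef ▸ cubeE_nonneg _ _ fun x => pow_nonneg (hu0 x) 3
  have hD0 : 0 ≤ D := hDdef ▸ cubeE_nonneg _ _ fun x => pow_nonneg (hu0 x) 4
  -- part 1 : E P₊ = E P₋
  have hpart1 : cubeE n (fun x => max (P x) 0) = A := by
    have h := cubeE_sub n (fun x => max (P x) 0) (fun x => max (-P x) 0)
    have he : (fun x => max (P x) 0 - max (-P x) 0) = P :=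
      funext fun x => max_zero_sub_max_neg_zero_eq_self (P x)
    rw [he, hmean] at h
    rw [hAdef]
    linarith
  -- E P² = σp² + σm²
  have hEP2 : (cubeE n fun x => (P x) ^ 2) = σp ^ 2 + σm ^ 2 := by
    rw [hσp2, hσm2]
    unfold cubeE
    rw [← add_div, ← Finset.sum_add_distrib]
    congr 1
    refine Finset.sum_congr rfl fun x _ => ?_
    rcases le_total (P x) 0 with h | h
    · rw [max_eq_right h, max_eq_left (neg_nonneg.mpr h)]; ring
    · rw [max_eq_left h, max_eq_right (neg_nonpos.mpr h)]; ring
  -- hypercontractivity : E P⁴ ≤ 9^d (E P²)²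
  have hhyp : (cubeE n fun x => (P x) ^ 4) ≤ 9 ^ d * (σp ^ 2 + σm ^ 2) ^ 2 := by
    have h := hyper n Finset.univ d a (fun S hS => absurd (Finset.subset_univ S) hS) hdeg
    have hE : (cubeE n fun x => (P x) ^ 4) ≤ 9 ^ d * (cubeE n fun x => (P x) ^ 2) ^ 2 := by
      unfold cubeE
      have hP4 : ∑ x : Fin n → Bool, (P x) ^ 4 = ∑ x : Fin n → Bool, (polyF n a x) ^ 4 :=
        Finset.sum_congr rfl fun x _ => by rw [hPa x]; rfl
      have hP2 : ∑ x : Fin n → Bool, (P x) ^ 2 = ∑ x : Fin n → Bool, (polyF n a x) ^ 2 :=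
        Finset.sum_congr rfl fun x _ => by rw [hPa x]; rfl
      rw [hP4, hP2]
      calc (∑ x : Fin n → Bool, (polyF n a x) ^ 4) / 2 ^ n
          ≤ (9 ^ d * (∑ x : Fin n → Bool, polyF n a x ^ 2) ^ 2 / 2 ^ n) / 2 ^ n :=
            div_le_div_of_nonneg_right h h2n.le
        _ = 9 ^ d * ((∑ x : Fin n → Bool, polyF n a x ^ 2) / 2 ^ n) ^ 2 := by ring
    rw [hEP2] at hE
    exact hE
  -- Cauchy-Schwarz 1 : (σm²)² ≤ A C
  have hcs1 : (σm ^ 2) ^ 2 ≤ A * C := by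
    have h := cubeE_CS n (fun x => Real.sqrt (max (-P x) 0))
      (fun x => max (-P x) 0 * Real.sqrt (max (-P x) 0))
    beta_reduce at h
    have e1 : (fun x => Real.sqrt (max (-P x) 0) * (max (-P x) 0 * Real.sqrt (max (-P x) 0)))
        = fun x => (max (-P x) 0) ^ 2 := funext fun x => by
      rw [show Real.sqrt (max (-P x) 0) * (max (-P x) 0 * Real.sqrt (max (-P x) 0))
        = max (-P x) 0 * (Real.sqrt (max (-P x) 0) * Real.sqrt (max (-P x) 0)) from by ring,
        Real.mul_self_sqrt (hu0 x)]
      ring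
    have e2 : (fun x => Real.sqrt (max (-P x) 0) ^ 2) = fun x => max (-P x) 0 :=
      funext fun x => Real.sq_sqrt (hu0 x)
    have e3 : (fun x => (max (-P x) 0 * Real.sqrt (max (-P x) 0)) ^ 2)
        = fun x => (max (-P x) 0) ^ 3 := funext fun x => by
      rw [mul_pow, Real.sq_sqrt (hu0 x)]
      ring
    rw [e1, e2, e3] at h
    rw [hσm2, hAdef, hCdef]
    exact h
  -- Cauchy-Schwarz 2 : C² ≤ σm² D
  have hcs2 : C ^ 2 ≤ σm ^ 2 * D := by
    have h := cubeE_CS n (fun x => max (-P x) 0) (fun x => (max (-P x) 0) ^ 2)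
    beta_reduce at h
    have e1 : (fun x => max (-P x) 0 * (max (-P x) 0) ^ 2) = fun x => (max (-P x) 0) ^ 3 :=
      funext fun x => by ring
    have e2 : (fun x => ((max (-P x) 0) ^ 2) ^ 2) = fun x => (max (-P x) 0) ^ 4 :=
      funext fun x => by ring
    rw [e1, e2] at h
    rw [hσm2, hCdef, hDdef]
    exact h
  -- D ≤ E P⁴
  have hDle : D ≤ cubeE n fun x => (P x) ^ 4 := by
    rw [hDdef]
    unfold cubeE
    refine div_le_div_of_nonneg_right (Finset.sum_le_sum fun x _ => ?_) h2n.le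
    rcases le_total (P x) 0 with h | h
    · rw [max_eq_left (neg_nonneg.mpr h)]
      exact le_of_eq (Even.neg_pow (by decide) _)
    · rw [max_eq_right (neg_nonpos.mpr h)]
      have h04 : (0:ℝ) ^ 4 = 0 := by norm_num
      rw [h04]
      positivity
  have hD9 : D ≤ 9 ^ d * (σp ^ 2 + σm ^ 2) ^ 2 := hDle.trans hhyp
  have hDpos : 0 < D := by
    rcases hD0.lt_or_eq with h | h
    · exact h
    · exfalso
      rw [← h, mul_zero] at hcs2
      have hC : C = 0 := by nlinarith
      rw [hC, mul_zero] at hcs1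
      nlinarith
  -- key : (σm²)³ ≤ A² D
  have hkey : (σm ^ 2) ^ 3 ≤ A ^ 2 * D := by
    have h1 : ((σm ^ 2) ^ 2) ^ 2 ≤ (A * C) ^ 2 := pow_le_pow_left₀ (sq_nonneg _) hcs1 2
    have h2 : A ^ 2 * C ^ 2 ≤ A ^ 2 * (σm ^ 2 * D) := mul_le_mul_of_nonneg_left hcs2 (sq_nonneg A)
    have h3 : (σm ^ 2) * (σm ^ 2) ^ 3 ≤ (σm ^ 2) * (A ^ 2 * D) := by
      calc (σm ^ 2) * (σm ^ 2) ^ 3 = ((σm ^ 2) ^ 2) ^ 2 := by ring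
        _ ≤ (A * C) ^ 2 := h1
        _ = A ^ 2 * C ^ 2 := by ring
        _ ≤ A ^ 2 * (σm ^ 2 * D) := h2
        _ = (σm ^ 2) * (A ^ 2 * D) := by ring
    exact (mul_le_mul_iff_right₀ hσm2pos).mp h3
  -- main lower bound on A
  have hAlow : σm ^ 3 / (3 ^ d * (σp ^ 2 + σm ^ 2)) ≤ A := by
    apply le_of_sq_le' hA0
    calc (σm ^ 3 / (3 ^ d * (σp ^ 2 + σm ^ 2))) ^ 2
        = (σm ^ 2) ^ 3 / (9 ^ d * (σp ^ 2 + σm ^ 2) ^ 2) := by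
          rw [div_pow, mul_pow, ← nine_pow, show (σm ^ 3) ^ 2 = (σm ^ 2) ^ 3 from by ring]
      _ ≤ (σm ^ 2) ^ 3 / D :=
          div_le_div_of_nonneg_left (by positivity) hDpos hD9
      _ ≤ A ^ 2 := (div_le_iff₀ hDpos).mpr hkey
  have hmain2 : σm ^ 3 / (2 * 3 ^ d * (σp ^ 2 + σm ^ 2)) ≤ A := by
    refine le_trans ?_ hAlow
    apply div_le_div_of_nonneg_left (by positivity) (mul_pos h3pos hσ2pos)
    have h2e : 2 * 3 ^ d * (σp ^ 2 + σm ^ 2) = 2 * (3 ^ d * (σp ^ 2 + σm ^ 2)) := by ring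
    linarith [mul_pos h3pos hσ2pos, h2e]
  refine ⟨⟨hpart1, hmain2⟩, ?_⟩
  -- σp bound
  have hAv : cubeE n (fun x => max (P x) 0) ≤ σp := by
    have h := cubeE_CS n (fun x => max (P x) 0) (fun _ => (1:ℝ))
    beta_reduce at h
    have e1 : (fun x => max (P x) 0 * 1) = fun x => max (P x) 0 := funext fun x => mul_one _
    have e2 : (fun _ : Fin n → Bool => (1:ℝ) ^ 2) = fun _ => (1:ℝ) := funext fun _ => one_pow 2
    rw [e1, e2, cubeE_one, mul_one, ← hσp2] at h
    exact le_of_sq_le' hσp0 h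
  have hA2 : A ≤ σp := hpart1 ▸ hAv
  have hσple : σp ^ 2 ≤ σm ^ 2 := by nlinarith
  have hd1 : (0:ℝ) < 4 * 3 ^ d := by positivity
  have hd2 : (0:ℝ) < 2 * 3 ^ d * (2 * σm ^ 2) := mul_pos (by positivity) (by linarith)
  have hc1 : σm / (4 * 3 ^ d) = σm ^ 3 / (2 * 3 ^ d * (2 * σm ^ 2)) := by
    rw [div_eq_div_iff hd1.ne' hd2.ne']
    ring
  calc σm / (4 * 3 ^ d) = σm ^ 3 / (2 * 3 ^ d * (2 * σm ^ 2)) := hc1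
    _ ≤ σm ^ 3 / (2 * 3 ^ d * (σp ^ 2 + σm ^ 2)) := by
        apply div_le_div_of_nonneg_left (by positivity)
          (by nlinarith [mul_pos h3pos hσ2pos] : (0:ℝ) < 2 * 3 ^ d * (σp ^ 2 + σm ^ 2))
        nlinarith [hσple, h3pos, mul_pos h3pos hσm2pos]
    _ ≤ A := hmain2
    _ ≤ σp := hA2
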